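/- Let s ≥ 1, z₀ ∈ ℝ^s, and Q = Σ_{r=2}^N Q^r. Then for every ρ ∈ ℝ and every positive semidefinite matrix Δ ∈ ℝ^{N×N}, the symmetric matrix Γ = Q − ρ E¹ + Δ satisfies rank Γ ≥ N − 1. -/

import Mathlib

open Matrix

noncomputable section

/-- Index set for the monomials of degree at most `2` in `s` variables: pairs
`(i, j)` with `i ≤ j` in `Fin (s+1)`, where index `0` stands for the constant `1`.
Its cardinality is `N = (s+1)(s+2)/2`. -/
abbrev MonIdx (s : ℕ) := {p : Fin (s + 1) × Fin (s + 1) // p.1 ≤ p.2}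

/-- The index of the constant monomial `1` (the "first" entry of `u₂`). -/
def idx1 (s : ℕ) : MonIdx s := ⟨(0, 0), le_refl _⟩

/-- Extended variable vector: `extv z 0 = 1` and `extv z (i+1) = z i`. -/
def extv {s : ℕ} (z : Fin s → ℝ) : Fin (s + 1) → ℝ := Fin.cons 1 z

/-- `u₂ z` : the vector of all monomials of degree at most `2` in `z`;
its entry at `⟨(i, j), _⟩` is `z_i z_j` (with the convention `z_0 = 1`). -/
def u2 {s : ℕ} (z : Fin s → ℝ) : MonIdx s → ℝ := fun p => extv z p.1.1 * extv z p.1.2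

/-- `E^r` : the diagonal matrix whose `(r, r)` entry is `1` and all others are `0`. -/
def Emat {s : ℕ} (r : MonIdx s) : Matrix (MonIdx s) (MonIdx s) ℝ :=
  Matrix.single r r 1

/-- `Q^r` : the symmetric matrix whose only nonzero entries are
`[Q^r]₁₁ = ((u₂ z₀)ᵣ)²`, `[Q^r]₁ᵣ = [Q^r]ᵣ₁ = -(u₂ z₀)ᵣ` and `[Q^r]ᵣᵣ = 1`. -/
def Qmat {s : ℕ} (z₀ : Fin s → ℝ) (r : MonIdx s) : Matrix (MonIdx s) (MonIdx s) ℝ :=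
  Matrix.single (idx1 s) (idx1 s) ((u2 z₀ r) ^ 2)
    + Matrix.single (idx1 s) r (-(u2 z₀ r))
    + Matrix.single r (idx1 s) (-(u2 z₀ r))
    + Matrix.single r r 1

/-- `Q = Σ_{r ≠ 1} Q^r`. -/
def Qsum {s : ℕ} (z₀ : Fin s → ℝ) : Matrix (MonIdx s) (MonIdx s) ℝ :=
  ∑ r ∈ Finset.univ.filter (fun r => r ≠ idx1 s), Qmat z₀ r

/-- for every `ρ ∈ ℝ` and every positive semidefinite `Δ`, the matrix
`Γ = Q − ρ E¹ + Δ` satisfies `rank Γ ≥ N − 1`. -/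
-- Auxiliary: rank of a principal submatrix is at most the rank of the matrix.
lemma rank_submatrix_le' {n m : Type*} [Fintype n] [Fintype m] [DecidableEq n] [DecidableEq m]
    (A : Matrix n n ℝ) (f : m → n) :
    (A.submatrix f f).rank ≤ A.rank := by
  have h1 : ((1 : Matrix n n ℝ).submatrix f (Equiv.refl n)) * A = A.submatrix f id := by
    rw [Matrix.one_submatrix_mul]; rfl
  have h2 : (A.submatrix f id) * ((1 : Matrix n n ℝ).submatrix (Equiv.refl n) f)
      = A.submatrix f f := by
    rw [Matrix.mul_submatrix_one]; rfl
  calc (A.submatrix f f).rank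
      = (((1 : Matrix n n ℝ).submatrix f (Equiv.refl n)) * A
          * ((1 : Matrix n n ℝ).submatrix (Equiv.refl n) f)).rank := by rw [h1, h2]
    _ ≤ (((1 : Matrix n n ℝ).submatrix f (Equiv.refl n)) * A).rank :=
        Matrix.rank_mul_le_left _ _
    _ ≤ A.rank := Matrix.rank_mul_le_right _ _

set_option maxHeartbeats 1000000 in
theorem stmt6 (s : ℕ) (hs : 1 ≤ s) (z₀ : Fin s → ℝ) (ρ : ℝ)
    (Δ : Matrix (MonIdx s) (MonIdx s) ℝ) (hΔ : Δ.PosSemidef) :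
    Fintype.card (MonIdx s) - 1 ≤ (Qsum z₀ - ρ • Emat (idx1 s) + Δ).rank := by
  classical
  let Γ : Matrix (MonIdx s) (MonIdx s) ℝ := Qsum z₀ - ρ • Emat (idx1 s) + Δ
  let f : {r : MonIdx s // r ≠ idx1 s} → MonIdx s := Subtype.val
  -- the principal submatrix on indices ≠ idx1
  have hsub : Γ.submatrix f f = 1 + Δ.submatrix f f := by
    ext a b
    have ha1 : ¬ (idx1 s = f a) := fun h => a.2 h.symm
    have hb1 : ¬ (idx1 s = f b) := fun h => b.2 h.symm
    have hfilt : f a ∈ Finset.univ.filter (fun r => r ≠ idx1 s) := by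
      exact Finset.mem_filter.mpr ⟨Finset.mem_univ _, a.2⟩
    have h0 : ∀ r ∈ Finset.univ.filter (fun r => r ≠ idx1 s),
        Qmat z₀ r (f a) (f b)
          = if r = f a then (if f a = f b then (1:ℝ) else 0) else 0 := by
      intro r hr
      simp only [Qmat, Matrix.add_apply, Matrix.single, Matrix.of_apply,
        if_neg (show ¬(idx1 s = f a ∧ idx1 s = f b) from fun h => ha1 h.1),
        if_neg (show ¬(idx1 s = f a ∧ r = f b) from fun h => ha1 h.1),
        if_neg (show ¬(r = f a ∧ idx1 s = f b) from fun h => hb1 h.2),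
        zero_add]
      by_cases h1 : r = f a
      · subst h1
        simp
      · simp [h1]
    have hQ : Qsum z₀ (f a) (f b) = if f a = f b then (1:ℝ) else 0 := by
      have hs1 : Qsum z₀ (f a) (f b)
          = ∑ r ∈ Finset.univ.filter (fun r => r ≠ idx1 s), Qmat z₀ r (f a) (f b) := by
        rw [Qsum, Matrix.sum_apply]
      rw [hs1, Finset.sum_congr rfl h0, Finset.sum_ite_eq' _ (f a)
        (fun _ => if f a = f b then (1:ℝ) else 0), if_pos hfilt]
    have hE : Emat (idx1 s) (f a) (f b) = 0 := by
      rw [Emat]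
      simp only [Matrix.single, Matrix.of_apply]
      rw [if_neg]; rintro ⟨h, -⟩; exact ha1 h
    show (Qsum z₀ - ρ • Emat (idx1 s) + Δ) (f a) (f b) = _
    simp only [Matrix.add_apply, Matrix.sub_apply, Matrix.smul_apply, hQ, hE,
      Matrix.one_apply, smul_zero, sub_zero]
    congr 1
    by_cases h : a = b
    · simp [h]
    · have : f a ≠ f b := fun hh => h (Subtype.ext hh)
      simp [h, this]
  have hΔ' : (Δ.submatrix f f).PosSemidef := hΔ.submatrix f
  have hpd : (Γ.submatrix f f).PosDef := by
    rw [hsub]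
    exact Matrix.PosDef.one.add_posSemidef hΔ'
  have hrank : (Γ.submatrix f f).rank = Fintype.card {r : MonIdx s // r ≠ idx1 s} :=
    Matrix.rank_of_isUnit _ hpd.isUnit
  have hcard : Fintype.card {r : MonIdx s // r ≠ idx1 s}
      = Fintype.card (MonIdx s) - 1 := by
    have := Fintype.card_subtype_compl (p := fun r : MonIdx s => r = idx1 s)
    simpa [Fintype.card_subtype_eq] using this
  calc Fintype.card (MonIdx s) - 1 = (Γ.submatrix f f).rank := by rw [hrank, hcard]
    _ ≤ Γ.rank := rank_submatrix_le' Γ f
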